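/- Each of the following birational transformations maps solutions of the C3^(1) system to solutions: with the notation (*) = (x,y,z,w,t; α0,α1,α2,α3), S0: (*) ↦ (−(x+α0/y+1/y²), −y, √(−1)·z, w/√(−1), −t; −α0, α1+α0, α2, α3); S1: (*) ↦ (x, y−α1/x, z, w, t; α0+2α1, −α1, α2+α1, α3); S2: (*) ↦ (x+α2/(y+w²−t), y, z+2α2w/(y+w²−t), w, t; α0, α1+α2, −α2, α3+2α2); S3: (*) ↦ (x, y, z, w−α3/z, t; α0, α1, α2+α3, −α3). Precisely: if (x(t),y(t),z(t),w(t)) is a differentiable solution of the C3^(1) system with parameters (α0,α1,α2,α3) on an open set where t ≠ 0 and the relevant denominators (y, x, y+w²−t, z respectively) do not vanish, then each transformed tuple solves the C3^(1) system with the transformed parameters (for S0, the transformed functions are regarded as functions of the new time −t). These transformations generate the affine Weyl group of type C3^(1). -/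

import Mathlib

/- STATEMENT 5: the Bäcklund transformations S0,…,S3 map solutions of the C3^(1)
system to solutions (with transformed parameters; S0 also transforms the time
t ↦ −t).  The final clause "these transformations generate the affine Weyl group
of type C3^(1)" is a side remark and not part of the formalized claim. -/

open Complex

noncomputable def HC3 (a0 a1 a2 a3 : ℂ) (t x y z w : ℂ) : ℂ :=
  (x^2*y^3 - (t*x + 2*a1 + a2 + a3)*x*y^2 - ((a0*t - 1)*x - a1*(a1+a2+a3))*y - t*x
    - z^2*w^4/4 + (a3/2)*z*w^3 + (1/4)*(2*t*z^2 - a3^2)*w^2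
    - (1/2)*((a3+1)*t - 1)*z*w - t^2*z^2/4
    + (x*y - a1)*y*z*w) / t^2

noncomputable def pdX (H : ℂ → ℂ → ℂ → ℂ → ℂ → ℂ) (t x y z w : ℂ) : ℂ :=
  deriv (fun s => H t s y z w) x

noncomputable def pdY (H : ℂ → ℂ → ℂ → ℂ → ℂ → ℂ) (t x y z w : ℂ) : ℂ :=
  deriv (fun s => H t x s z w) y

noncomputable def pdZ (H : ℂ → ℂ → ℂ → ℂ → ℂ → ℂ) (t x y z w : ℂ) : ℂ :=
  deriv (fun s => H t x y s w) z

noncomputable def pdW (H : ℂ → ℂ → ℂ → ℂ → ℂ → ℂ) (t x y z w : ℂ) : ℂ :=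
  deriv (fun s => H t x y z s) w

def IsSol (H : ℂ → ℂ → ℂ → ℂ → ℂ → ℂ) (U : Set ℂ) (x y z w : ℂ → ℂ) : Prop :=
  ∀ t ∈ U,
    HasDerivAt x (pdY H t (x t) (y t) (z t) (w t)) t ∧
    HasDerivAt y (-(pdX H t (x t) (y t) (z t) (w t))) t ∧
    HasDerivAt z (pdW H t (x t) (y t) (z t) (w t)) t ∧
    HasDerivAt w (-(pdZ H t (x t) (y t) (z t) (w t))) t

set_option maxHeartbeats 4000000

lemma deriv_poly4 (A4 A3 A2 A1 A0 u : ℂ) :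
    deriv (fun s => A4*s^4 + A3*s^3 + A2*s^2 + A1*s + A0) u
      = 4*A4*u^3 + 3*A3*u^2 + 2*A2*u + A1 := by
  have h : HasDerivAt (fun s => A4*s^4 + A3*s^3 + A2*s^2 + A1*s + A0)
      (4*A4*u^3 + 3*A3*u^2 + 2*A2*u + A1) u := by
    have := (((((hasDerivAt_pow 4 u).const_mul A4).add
        ((hasDerivAt_pow 3 u).const_mul A3)).add
        ((hasDerivAt_pow 2 u).const_mul A2)).add
        ((hasDerivAt_id u).const_mul A1)).add_const A0
    exact this.congr_deriv (by push_cast; ring)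
  exact h.deriv

lemma pdX_HC3 (a0 a1 a2 a3 t x y z w : ℂ) :
    pdX (HC3 a0 a1 a2 a3) t x y z w
      = (2*x*y^3 - 2*t*x*y^2 - (2*a1+a2+a3)*y^2 - (a0*t-1)*y - t + y^2*z*w)/t^2 := by
  unfold pdX
  rw [show (fun s => HC3 a0 a1 a2 a3 t s y z w)
      = fun s => 0*s^4 + 0*s^3 + ((y^3 - t*y^2)/t^2)*s^2
        + ((-(2*a1+a2+a3)*y^2 - (a0*t-1)*y - t + y^2*z*w)/t^2)*s
        + ((a1*(a1+a2+a3)*y - z^2*w^4/4 + (a3/2)*z*w^3 + (1/4)*(2*t*z^2-a3^2)*w^2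
            - (1/2)*((a3+1)*t-1)*z*w - t^2*z^2/4 - a1*y*z*w)/t^2)
      from funext fun s => by simp only [HC3]; ring]
  rw [deriv_poly4]; ring

lemma pdY_HC3 (a0 a1 a2 a3 t x y z w : ℂ) :
    pdY (HC3 a0 a1 a2 a3) t x y z w
      = (3*x^2*y^2 - 2*(t*x+2*a1+a2+a3)*x*y - ((a0*t-1)*x - a1*(a1+a2+a3))
          + 2*x*y*z*w - a1*z*w)/t^2 := by
  unfold pdY
  rw [show (fun s => HC3 a0 a1 a2 a3 t x s z w)
      = fun s => 0*s^4 + (x^2/t^2)*s^3 + ((-(t*x+2*a1+a2+a3)*x + x*z*w)/t^2)*s^2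
        + ((-((a0*t-1)*x - a1*(a1+a2+a3)) - a1*z*w)/t^2)*s
        + ((-t*x - z^2*w^4/4 + (a3/2)*z*w^3 + (1/4)*(2*t*z^2-a3^2)*w^2
            - (1/2)*((a3+1)*t-1)*z*w - t^2*z^2/4)/t^2)
      from funext fun s => by simp only [HC3]; ring]
  rw [deriv_poly4]; ring

lemma pdZ_HC3 (a0 a1 a2 a3 t x y z w : ℂ) :
    pdZ (HC3 a0 a1 a2 a3) t x y z w
      = (-z*w^4/2 + (a3/2)*w^3 + t*z*w^2 - ((a3+1)*t-1)*w/2 - t^2*z/2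
          + (x*y-a1)*y*w)/t^2 := by
  unfold pdZ
  rw [show (fun s => HC3 a0 a1 a2 a3 t x y s w)
      = fun s => 0*s^4 + 0*s^3 + ((-w^4/4 + t*w^2/2 - t^2/4)/t^2)*s^2
        + (((a3/2)*w^3 - (1/2)*((a3+1)*t-1)*w + (x*y-a1)*y*w)/t^2)*s
        + ((x^2*y^3 - (t*x+2*a1+a2+a3)*x*y^2 - ((a0*t-1)*x - a1*(a1+a2+a3))*y
            - t*x - a3^2*w^2/4)/t^2)
      from funext fun s => by simp only [HC3]; ring]
  rw [deriv_poly4]; ring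

lemma pdW_HC3 (a0 a1 a2 a3 t x y z w : ℂ) :
    pdW (HC3 a0 a1 a2 a3) t x y z w
      = (-z^2*w^3 + (3*a3/2)*z*w^2 + (1/2)*(2*t*z^2-a3^2)*w
          - (1/2)*((a3+1)*t-1)*z + (x*y-a1)*y*z)/t^2 := by
  unfold pdW
  rw [show (fun s => HC3 a0 a1 a2 a3 t x y z s)
      = fun s => ((-z^2/4)/t^2)*s^4 + (((a3/2)*z)/t^2)*s^3
        + (((1/4)*(2*t*z^2 - a3^2))/t^2)*s^2
        + ((-(1/2)*((a3+1)*t-1)*z + (x*y-a1)*y*z)/t^2)*s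
        + ((x^2*y^3 - (t*x+2*a1+a2+a3)*x*y^2 - ((a0*t-1)*x - a1*(a1+a2+a3))*y
            - t*x - t^2*z^2/4)/t^2)
      from funext fun s => by simp only [HC3]; ring]
  rw [deriv_poly4]; ring

theorem backlund_C3 (a0 a1 a2 a3 : ℂ)
    (hrel : a0 + 2*a1 + 2*a2 + a3 = 1)
    (U : Set ℂ) (hU : IsOpen U) (hU0 : ∀ t ∈ U, t ≠ 0)
    (x y z w : ℂ → ℂ)
    (hsol : IsSol (HC3 a0 a1 a2 a3) U x y z w) :
    -- S0 : the transformed functions are functions of the new time T = −t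
    ((∀ t ∈ U, y t ≠ 0) →
      IsSol (HC3 (-a0) (a1+a0) a2 a3) ((fun t => -t) '' U)
        (fun T => -(x (-T) + a0/(y (-T)) + 1/(y (-T))^2))
        (fun T => -(y (-T)))
        (fun T => I * z (-T))
        (fun T => w (-T) / I)) ∧
    -- S1
    ((∀ t ∈ U, x t ≠ 0) →
      IsSol (HC3 (a0+2*a1) (-a1) (a2+a1) a3) U
        x (fun t => y t - a1/(x t)) z w) ∧
    -- S2
    ((∀ t ∈ U, y t + (w t)^2 - t ≠ 0) →
      IsSol (HC3 a0 (a1+a2) (-a2) (a3+2*a2)) U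
        (fun t => x t + a2/(y t + (w t)^2 - t)) y
        (fun t => z t + 2*a2*(w t)/(y t + (w t)^2 - t)) w) ∧
    -- S3
    ((∀ t ∈ U, z t ≠ 0) →
      IsSol (HC3 a0 a1 (a2+a3) (-a3)) U
        x y z (fun t => w t - a3/(z t))) := by
  refine ⟨?_, ?_, ?_, ?_⟩
  · -- S0
    intro hden T hT
    obtain ⟨t0, ht0U, hTt⟩ := hT
    have hmem : -T ∈ U := by rw [← hTt]; simpa using ht0U
    obtain ⟨hx, hy, hz, hw⟩ := hsol (-T) hmem
    have htn : (-T) ≠ 0 := hU0 (-T) hmem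
    have hTn : T ≠ 0 := fun h => htn (by rw [h, neg_zero])
    have hyn : y (-T) ≠ 0 := hden (-T) hmem
    have hTi : T * T⁻¹ = 1 := mul_inv_cancel₀ hTn
    have hyi : y (-T) * (y (-T))⁻¹ = 1 := mul_inv_cancel₀ hyn
    have hJi : I * I⁻¹ = 1 := mul_inv_cancel₀ I_ne_zero
    have hneg : HasDerivAt (fun S : ℂ => -S) (-1) T := (hasDerivAt_id' T).neg
    have hxc : HasDerivAt (fun S => x (-S)) ((pdY (HC3 a0 a1 a2 a3) (-T) (x (-T)) (y (-T)) (z (-T)) (w (-T))) * -1) T := hx.comp T hneg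
    have hyc : HasDerivAt (fun S => y (-S)) ((-(pdX (HC3 a0 a1 a2 a3) (-T) (x (-T)) (y (-T)) (z (-T)) (w (-T)))) * -1) T := hy.comp T hneg
    have hzc : HasDerivAt (fun S => z (-S)) ((pdW (HC3 a0 a1 a2 a3) (-T) (x (-T)) (y (-T)) (z (-T)) (w (-T))) * -1) T := hz.comp T hneg
    have hwc : HasDerivAt (fun S => w (-S)) ((-(pdZ (HC3 a0 a1 a2 a3) (-T) (x (-T)) (y (-T)) (z (-T)) (w (-T)))) * -1) T := hw.comp T hneg
    refine ⟨?_, ?_, ?_, ?_⟩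
    · have hA1 : HasDerivAt (fun S => x (-S) + a0 / y (-S)) ((pdY (HC3 a0 a1 a2 a3) (-T) (x (-T)) (y (-T)) (z (-T)) (w (-T))) * -1 + (0 * y (-T) - a0 * ((-(pdX (HC3 a0 a1 a2 a3) (-T) (x (-T)) (y (-T)) (z (-T)) (w (-T)))) * -1)) / y (-T) ^ 2) T :=
        hxc.add ((hasDerivAt_const T a0).div hyc hyn)
      have hA2 : HasDerivAt (fun S => x (-S) + a0 / y (-S) + 1 / y (-S) ^ 2) ((pdY (HC3 a0 a1 a2 a3) (-T) (x (-T)) (y (-T)) (z (-T)) (w (-T))) * -1 + (0 * y (-T) - a0 * ((-(pdX (HC3 a0 a1 a2 a3) (-T) (x (-T)) (y (-T)) (z (-T)) (w (-T)))) * -1)) / y (-T) ^ 2 + (0 * y (-T) ^ 2 - 1 * (((2:ℕ):ℂ) * y (-T) ^ (2 - 1) * ((-(pdX (HC3 a0 a1 a2 a3) (-T) (x (-T)) (y (-T)) (z (-T)) (w (-T)))) * -1))) / (y (-T) ^ 2) ^ 2) T :=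
        hA1.add ((hasDerivAt_const T 1).div (hyc.pow 2) (pow_ne_zero 2 hyn))
      have hA3 : HasDerivAt (fun S => -(x (-S) + a0 / y (-S) + 1 / y (-S) ^ 2)) (-((pdY (HC3 a0 a1 a2 a3) (-T) (x (-T)) (y (-T)) (z (-T)) (w (-T))) * -1 + (0 * y (-T) - a0 * ((-(pdX (HC3 a0 a1 a2 a3) (-T) (x (-T)) (y (-T)) (z (-T)) (w (-T)))) * -1)) / y (-T) ^ 2 + (0 * y (-T) ^ 2 - 1 * (((2:ℕ):ℂ) * y (-T) ^ (2 - 1) * ((-(pdX (HC3 a0 a1 a2 a3) (-T) (x (-T)) (y (-T)) (z (-T)) (w (-T)))) * -1))) / (y (-T) ^ 2) ^ 2)) T := hA2.neg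
      show HasDerivAt (fun S => -(x (-S) + a0 / y (-S) + 1 / y (-S) ^ 2))
        (pdY (HC3 (-a0) (a1 + a0) a2 a3) T (-(x (-T) + a0 / y (-T) + 1 / y (-T) ^ 2)) (-(y (-T))) (I * z (-T)) (w (-T) / I)) T
      have e1 : pdY (HC3 (-a0) (a1 + a0) a2 a3) T (-(x (-T) + a0 / y (-T) + 1 / y (-T) ^ 2)) (-(y (-T))) (I * z (-T)) (w (-T) / I) = -((pdY (HC3 a0 a1 a2 a3) (-T) (x (-T)) (y (-T)) (z (-T)) (w (-T))) * -1 + (0 * y (-T) - a0 * ((-(pdX (HC3 a0 a1 a2 a3) (-T) (x (-T)) (y (-T)) (z (-T)) (w (-T)))) * -1)) / y (-T) ^ 2 + (0 * y (-T) ^ 2 - 1 * (((2:ℕ):ℂ) * y (-T) ^ (2 - 1) * ((-(pdX (HC3 a0 a1 a2 a3) (-T) (x (-T)) (y (-T)) (z (-T)) (w (-T)))) * -1))) / (y (-T) ^ 2) ^ 2) := by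
        simp only [pdX_HC3, pdY_HC3, pdZ_HC3, pdW_HC3, neg_sq]
        linear_combination ((4) * (x (-T)) * (y (-T)) * T⁻¹ * (y (-T))⁻¹ ^ 2 + (-4) * (x (-T)) * (y (-T)) ^ 3 * T⁻¹ * (y (-T))⁻¹ ^ 4 + (-2) * a0 * T⁻¹ * (y (-T))⁻¹ ^ 2 + (4) * a0 * (y (-T)) * T⁻¹ * (y (-T))⁻¹ ^ 3 + (-2) * a0 * (y (-T)) ^ 2 * T⁻¹ * (y (-T))⁻¹ ^ 4 + (-2) * a0 * (x (-T)) * T⁻¹ + (4) * a0 * (x (-T)) * (y (-T)) * T⁻¹ * (y (-T))⁻¹ + (-2) * a0 * (x (-T)) * (y (-T)) ^ 2 * T⁻¹ * (y (-T))⁻¹ ^ 2 + (-1) * a0 ^ 2 * T⁻¹ * (y (-T))⁻¹ + (1) * a0 ^ 2 * (y (-T)) * T⁻¹ * (y (-T))⁻¹ ^ 2) * hTi + ((1) * T⁻¹ ^ 2 * (y (-T))⁻¹ ^ 2 + (-2) * (z (-T)) * (w (-T)) * T⁻¹ ^ 2 * (y (-T))⁻¹ + (2) * (z (-T)) * (w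 (-T)) * I * T⁻¹ ^ 2 * (y (-T))⁻¹ * I⁻¹ + (1) * (y (-T)) * T⁻¹ ^ 2 * (y (-T))⁻¹ ^ 3 + (-2) * (y (-T)) * (z (-T)) * (w (-T)) * T⁻¹ ^ 2 * (y (-T))⁻¹ ^ 2 + (-2) * (y (-T)) ^ 2 * (z (-T)) * (w (-T)) * T⁻¹ ^ 2 * (y (-T))⁻¹ ^ 3 + (2) * (x (-T)) * T⁻¹ ^ 2 + (-4) * (x (-T)) * (y (-T)) * T⁻¹ * (y (-T))⁻¹ ^ 2 + (2) * (x (-T)) * (y (-T)) * T⁻¹ ^ 2 * (y (-T))⁻¹ + (-4) * (x (-T)) * (y (-T)) ^ 2 * T⁻¹ * (y (-T))⁻¹ ^ 3 + (-4) * (x (-T)) * (y (-T)) ^ 2 * T⁻¹ ^ 2 * (y (-T))⁻¹ ^ 2 + (-4) * (x (-T)) * (y (-T)) ^ 3 * T⁻¹ ^ 2 * (y (-T))⁻¹ ^ 3 + (2) * a3 * (y (-T)) * T⁻¹ ^ 2 * (y (-T))⁻¹ ^ 2 + (2) * a3 * (y (-T)) ^ 2 * T⁻¹ ^ 2 * (y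 (-T))⁻¹ ^ 3 + (2) * a2 * (y (-T)) * T⁻¹ ^ 2 * (y (-T))⁻¹ ^ 2 + (2) * a2 * (y (-T)) ^ 2 * T⁻¹ ^ 2 * (y (-T))⁻¹ ^ 3 + (4) * a1 * (y (-T)) * T⁻¹ ^ 2 * (y (-T))⁻¹ ^ 2 + (4) * a1 * (y (-T)) ^ 2 * T⁻¹ ^ 2 * (y (-T))⁻¹ ^ 3 + (2) * a0 * T⁻¹ * (y (-T))⁻¹ ^ 2 + (1) * a0 * T⁻¹ ^ 2 * (y (-T))⁻¹ + (-1) * a0 * (z (-T)) * (w (-T)) * T⁻¹ ^ 2 + (2) * a0 * (z (-T)) * (w (-T)) * I * T⁻¹ ^ 2 * I⁻¹ + (-2) * a0 * (y (-T)) * T⁻¹ * (y (-T))⁻¹ ^ 3 + (6) * a0 * (y (-T)) * T⁻¹ ^ 2 * (y (-T))⁻¹ ^ 2 + (-1) * a0 * (y (-T)) * (z (-T)) * (w (-T)) * T⁻¹ ^ 2 * (y (-T))⁻¹ + (2) * a0 * (x (-T)) * T⁻¹ + (-2) * a0 * (x (-T)) * (y (-T)) * T⁻¹ * (y (-T))⁻¹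 + (4) * a0 * (x (-T)) * (y (-T)) * T⁻¹ ^ 2 + (-2) * a0 * (x (-T)) * (y (-T)) ^ 2 * T⁻¹ ^ 2 * (y (-T))⁻¹ + (-1) * a0 * a3 * T⁻¹ ^ 2 + (1) * a0 * a3 * (y (-T)) * T⁻¹ ^ 2 * (y (-T))⁻¹ + (-1) * a0 * a2 * T⁻¹ ^ 2 + (1) * a0 * a2 * (y (-T)) * T⁻¹ ^ 2 * (y (-T))⁻¹ + (-2) * a0 * a1 * T⁻¹ ^ 2 + (2) * a0 * a1 * (y (-T)) * T⁻¹ ^ 2 * (y (-T))⁻¹ + (1) * a0 ^ 2 * T⁻¹ * (y (-T))⁻¹ + (-1) * a0 ^ 2 * T⁻¹ ^ 2 + (3) * a0 ^ 2 * (y (-T)) * T⁻¹ ^ 2 * (y (-T))⁻¹) * hyi + ((2) * (z (-T)) * (w (-T)) * T⁻¹ ^ 2 * (y (-T))⁻¹ + (2) * (x (-T)) * (y (-T)) * (z (-T)) * (w (-T)) * T⁻¹ ^ 2 + (-1) * a1 * (z (-T)) * (w (-T)) * T⁻¹ ^ 2 + (1) * a0 * (z (-T)) * (w (-T)) * T⁻¹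 ^ 2) * hJi
      rw [e1]; exact hA3
    · have hY : HasDerivAt (fun S => -(y (-S))) (-((-(pdX (HC3 a0 a1 a2 a3) (-T) (x (-T)) (y (-T)) (z (-T)) (w (-T)))) * -1)) T := hyc.neg
      show HasDerivAt (fun S => -(y (-S))) (-(pdX (HC3 (-a0) (a1 + a0) a2 a3) T (-(x (-T) + a0 / y (-T) + 1 / y (-T) ^ 2)) (-(y (-T))) (I * z (-T)) (w (-T) / I))) T
      have e2 : pdX (HC3 (-a0) (a1 + a0) a2 a3) T (-(x (-T) + a0 / y (-T) + 1 / y (-T) ^ 2)) (-(y (-T))) (I * z (-T)) (w (-T) / I) = (-(pdX (HC3 a0 a1 a2 a3) (-T) (x (-T)) (y (-T)) (z (-T)) (w (-T)))) * -1 := by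
        simp only [pdX_HC3, pdY_HC3, pdZ_HC3, pdW_HC3, neg_sq]
        linear_combination ((-2) * T⁻¹ + (2) * (y (-T)) ^ 2 * T⁻¹ * (y (-T))⁻¹ ^ 2 + (-2) * a0 * (y (-T)) * T⁻¹ + (2) * a0 * (y (-T)) ^ 2 * T⁻¹ * (y (-T))⁻¹) * hTi + ((2) * T⁻¹ + (2) * (y (-T)) * T⁻¹ * (y (-T))⁻¹ + (2) * (y (-T)) * T⁻¹ ^ 2 + (2) * (y (-T)) ^ 2 * T⁻¹ ^ 2 * (y (-T))⁻¹ + (2) * a0 * (y (-T)) * T⁻¹ + (2) * a0 * (y (-T)) ^ 2 * T⁻¹ ^ 2) * hyi + ((1) * (y (-T)) ^ 2 * (z (-T)) * (w (-T)) * T⁻¹ ^ 2) * hJi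
      rw [e2]; exact hY
    · have hZ : HasDerivAt (fun S => I * z (-S)) (I * ((pdW (HC3 a0 a1 a2 a3) (-T) (x (-T)) (y (-T)) (z (-T)) (w (-T))) * -1)) T := hzc.const_mul I
      show HasDerivAt (fun S => I * z (-S)) (pdW (HC3 (-a0) (a1 + a0) a2 a3) T (-(x (-T) + a0 / y (-T) + 1 / y (-T) ^ 2)) (-(y (-T))) (I * z (-T)) (w (-T) / I)) T
      have e3 : pdW (HC3 (-a0) (a1 + a0) a2 a3) T (-(x (-T) + a0 / y (-T) + 1 / y (-T) ^ 2)) (-(y (-T))) (I * z (-T)) (w (-T) / I) = I * ((pdW (HC3 a0 a1 a2 a3) (-T) (x (-T)) (y (-T)) (z (-T)) (w (-T))) * -1) := by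
        simp only [pdX_HC3, pdY_HC3, pdZ_HC3, pdW_HC3, neg_sq]
        linear_combination ((-1) * (z (-T)) ^ 2 * (w (-T)) * I * T⁻¹ + (1) * (z (-T)) ^ 2 * (w (-T)) * I ^ 2 * T⁻¹ * I⁻¹) * hTi + ((-1) * (z (-T)) * I * T⁻¹ ^ 2 + (-1) * (y (-T)) * (z (-T)) * I * T⁻¹ ^ 2 * (y (-T))⁻¹ + (-1) * a0 * (y (-T)) * (z (-T)) * I * T⁻¹ ^ 2) * hyi + ((-1) * (z (-T)) ^ 2 * (w (-T)) ^ 3 * T⁻¹ ^ 2 * I⁻¹ + (3/2) * a3 * (z (-T)) * (w (-T)) ^ 2 * T⁻¹ ^ 2 * I⁻¹ + (-1/2) * a3 ^ 2 * (w (-T)) * T⁻¹ ^ 2 * I⁻¹) * Complex.I_sq + ((1) * (z (-T)) ^ 2 * (w (-T)) * I * T⁻¹ + (-1) * (z (-T)) ^ 2 * (w (-T)) ^ 3 * T⁻¹ ^ 2 * I⁻¹ + (1) * (z (-T)) ^ 2 * (w (-T)) ^ 3 * I * T⁻¹ ^ 2 + (-1) * (z (-T)) ^ 2 * (w (-T))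 ^ 3 * I * T⁻¹ ^ 2 * I⁻¹ ^ 2 + (3/2) * a3 * (z (-T)) * (w (-T)) ^ 2 * T⁻¹ ^ 2 * I⁻¹ + (-3/2) * a3 * (z (-T)) * (w (-T)) ^ 2 * I * T⁻¹ ^ 2 + (1/2) * a3 ^ 2 * (w (-T)) * I * T⁻¹ ^ 2) * hJi
      rw [e3]; exact hZ
    · have hW : HasDerivAt (fun S => w (-S) / I) (((-(pdZ (HC3 a0 a1 a2 a3) (-T) (x (-T)) (y (-T)) (z (-T)) (w (-T)))) * -1) / I) T := hwc.div_const I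
      show HasDerivAt (fun S => w (-S) / I) (-(pdZ (HC3 (-a0) (a1 + a0) a2 a3) T (-(x (-T) + a0 / y (-T) + 1 / y (-T) ^ 2)) (-(y (-T))) (I * z (-T)) (w (-T) / I))) T
      have e4 : -(pdZ (HC3 (-a0) (a1 + a0) a2 a3) T (-(x (-T) + a0 / y (-T) + 1 / y (-T) ^ 2)) (-(y (-T))) (I * z (-T)) (w (-T) / I)) = ((-(pdZ (HC3 a0 a1 a2 a3) (-T) (x (-T)) (y (-T)) (z (-T)) (w (-T)))) * -1) / I := by
        simp only [pdX_HC3, pdY_HC3, pdZ_HC3, pdW_HC3, neg_sq]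
        linear_combination ((1/2) * (z (-T)) * I⁻¹ + (1/2) * (z (-T)) * I + (1) * (z (-T)) * (w (-T)) ^ 2 * T⁻¹ * I⁻¹ + (-1) * (z (-T)) * (w (-T)) ^ 2 * I * T⁻¹ * I⁻¹ ^ 2 + (1/2) * T * (z (-T)) * T⁻¹ * I⁻¹ + (1/2) * T * (z (-T)) * I * T⁻¹) * hTi + ((1) * (w (-T)) * T⁻¹ ^ 2 * I⁻¹ + (1) * (y (-T)) * (w (-T)) * T⁻¹ ^ 2 * (y (-T))⁻¹ * I⁻¹ + (1) * a0 * (y (-T)) * (w (-T)) * T⁻¹ ^ 2 * I⁻¹) * hyi + ((1/2) * (z (-T)) * I⁻¹ + (1/2) * (z (-T)) * (w (-T)) ^ 4 * T⁻¹ ^ 2 * I⁻¹ ^ 3 + (-1/2) * a3 * (w (-T)) ^ 3 * T⁻¹ ^ 2 * I⁻¹ ^ 3) * Complex.I_sq + ((-1/2) * (z (-T)) * I + (-1) * (z (-T)) * (w (-T)) ^ 2 * T⁻¹ * I⁻¹ + (-1/2) * (z (-T)) * (w (-T)) ^ 4 * T⁻¹ ^ 2 * I⁻¹ + (1/2) *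 (z (-T)) * (w (-T)) ^ 4 * T⁻¹ ^ 2 * I⁻¹ ^ 3 + (-1/2) * (z (-T)) * (w (-T)) ^ 4 * I * T⁻¹ ^ 2 * I⁻¹ ^ 2 + (1/2) * a3 * (w (-T)) ^ 3 * T⁻¹ ^ 2 * I⁻¹ + (1/2) * a3 * (w (-T)) ^ 3 * I * T⁻¹ ^ 2 * I⁻¹ ^ 2) * hJi
      rw [e4]; exact hW
  · -- S1
    intro hden t0 ht0
    obtain ⟨hx, hy, hz, hw⟩ := hsol t0 ht0
    have ht : t0 ≠ 0 := hU0 t0 ht0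
    have hxn : x t0 ≠ 0 := hden t0 ht0
    have hti : t0 * t0⁻¹ = 1 := mul_inv_cancel₀ ht
    have hxi : x t0 * (x t0)⁻¹ = 1 := mul_inv_cancel₀ hxn
    refine ⟨?_, ?_, ?_, ?_⟩
    · show HasDerivAt x (pdY (HC3 (a0 + 2 * a1) (-a1) (a2 + a1) a3) t0 (x t0) (y t0 - a1 / x t0) (z t0) (w t0)) t0
      have e1 : pdY (HC3 (a0 + 2 * a1) (-a1) (a2 + a1) a3) t0 (x t0) (y t0 - a1 / x t0) (z t0) (w t0) = pdY (HC3 a0 a1 a2 a3) t0 (x t0) (y t0) (z t0) (w t0) := by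
        simp only [pdX_HC3, pdY_HC3, pdZ_HC3, pdW_HC3]
        linear_combination ((-2) * a1 * (x t0) * t0⁻¹ + (2) * a1 * (x t0) ^ 2 * t0⁻¹ * (x t0)⁻¹) * hti + ((-2) * a1 * (z t0) * (w t0) * t0⁻¹ ^ 2 + (2) * a1 * (x t0) * t0⁻¹ + (-6) * a1 * (x t0) * (y t0) * t0⁻¹ ^ 2 + (2) * a1 * a3 * t0⁻¹ ^ 2 + (2) * a1 * a2 * t0⁻¹ ^ 2 + (1) * a1 ^ 2 * t0⁻¹ ^ 2 + (3) * a1 ^ 2 * (x t0) * t0⁻¹ ^ 2 * (x t0)⁻¹) * hxi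
      rw [e1]; exact hx
    · have hD : HasDerivAt (fun s => y s - a1 / x s)
          (-(pdX (HC3 a0 a1 a2 a3) t0 (x t0) (y t0) (z t0) (w t0)) - (0 * x t0 - a1 * (pdY (HC3 a0 a1 a2 a3) t0 (x t0) (y t0) (z t0) (w t0))) / x t0 ^ 2) t0 :=
        hy.sub ((hasDerivAt_const t0 a1).div hx hxn)
      show HasDerivAt (fun s => y s - a1 / x s) (-(pdX (HC3 (a0 + 2 * a1) (-a1) (a2 + a1) a3) t0 (x t0) (y t0 - a1 / x t0) (z t0) (w t0))) t0
      have e2 : -(pdX (HC3 (a0 + 2 * a1) (-a1) (a2 + a1) a3) t0 (x t0) (y t0 - a1 / x t0) (z t0) (w t0)) = -(pdX (HC3 a0 a1 a2 a3) t0 (x t0) (y t0) (z t0) (w t0)) - (0 * x t0 - a1 * (pdY (HC3 a0 a1 a2 a3) t0 (x t0) (y t0) (z t0) (w t0))) / x t0 ^ 2 := by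
        simp only [pdX_HC3, pdY_HC3, pdZ_HC3, pdW_HC3]
        linear_combination ((2) * a1 * (y t0) * t0⁻¹ + (-4) * a1 * (x t0) * (y t0) * t0⁻¹ * (x t0)⁻¹ + (2) * a1 * (x t0) ^ 2 * (y t0) * t0⁻¹ * (x t0)⁻¹ ^ 2 + (-2) * a1 ^ 2 * t0⁻¹ * (x t0)⁻¹ + (2) * a1 ^ 2 * (x t0) * t0⁻¹ * (x t0)⁻¹ ^ 2 + (-1) * a0 * a1 * t0⁻¹ * (x t0)⁻¹ + (1) * a0 * a1 * (x t0) * t0⁻¹ * (x t0)⁻¹ ^ 2) * hti + ((-1) * a1 * t0⁻¹ ^ 2 * (x t0)⁻¹ + (-2) * a1 * (y t0) * t0⁻¹ + (-2) * a1 * (y t0) * (z t0) * (w t0) * t0⁻¹ ^ 2 * (x t0)⁻¹ + (3) * a1 * (y t0) ^ 2 * t0⁻¹ ^ 2 + (2) * a1 * (x t0) * (y t0) * t0⁻¹ * (x t0)⁻¹ + (-3) * a1 * (x t0) * (y t0) ^ 2 * t0⁻¹ ^ 2 * (x t0)⁻¹ + (2) * a1 * a3 * (y t0) * t0⁻¹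 ^ 2 * (x t0)⁻¹ + (2) * a1 * a2 * (y t0) * t0⁻¹ ^ 2 * (x t0)⁻¹ + (2) * a1 ^ 2 * t0⁻¹ * (x t0)⁻¹ + (-2) * a1 ^ 2 * (y t0) * t0⁻¹ ^ 2 * (x t0)⁻¹ + (2) * a1 ^ 3 * t0⁻¹ ^ 2 * (x t0)⁻¹ ^ 2 + (1) * a0 * a1 * t0⁻¹ * (x t0)⁻¹) * hxi
      rw [e2]; exact hD
    · show HasDerivAt z (pdW (HC3 (a0 + 2 * a1) (-a1) (a2 + a1) a3) t0 (x t0) (y t0 - a1 / x t0) (z t0) (w t0)) t0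
      have e3 : pdW (HC3 (a0 + 2 * a1) (-a1) (a2 + a1) a3) t0 (x t0) (y t0 - a1 / x t0) (z t0) (w t0) = pdW (HC3 a0 a1 a2 a3) t0 (x t0) (y t0) (z t0) (w t0) := by
        simp only [pdX_HC3, pdY_HC3, pdZ_HC3, pdW_HC3]
        linear_combination ((-2) * a1 * (y t0) * (z t0) * t0⁻¹ ^ 2 + (1) * a1 ^ 2 * (z t0) * t0⁻¹ ^ 2 * (x t0)⁻¹) * hxi
      rw [e3]; exact hz
    · show HasDerivAt w (-(pdZ (HC3 (a0 + 2 * a1) (-a1) (a2 + a1) a3) t0 (x t0) (y t0 - a1 / x t0) (z t0) (w t0))) t0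
      have e4 : pdZ (HC3 (a0 + 2 * a1) (-a1) (a2 + a1) a3) t0 (x t0) (y t0 - a1 / x t0) (z t0) (w t0) = pdZ (HC3 a0 a1 a2 a3) t0 (x t0) (y t0) (z t0) (w t0) := by
        simp only [pdX_HC3, pdY_HC3, pdZ_HC3, pdW_HC3]
        linear_combination ((-2) * a1 * (y t0) * (w t0) * t0⁻¹ ^ 2 + (1) * a1 ^ 2 * (w t0) * t0⁻¹ ^ 2 * (x t0)⁻¹) * hxi
      rw [e4]; exact hw
  · -- S2
    intro hden t0 ht0
    obtain ⟨hx, hy, hz, hw⟩ := hsol t0 ht0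
    have ht : t0 ≠ 0 := hU0 t0 ht0
    have hDn : y t0 + w t0 ^ 2 - t0 ≠ 0 := hden t0 ht0
    have hti : t0 * t0⁻¹ = 1 := mul_inv_cancel₀ ht
    have hDu : (y t0 + w t0 ^ 2 - t0) * (y t0 + w t0 ^ 2 - t0)⁻¹ = 1 := mul_inv_cancel₀ hDn
    have hD : HasDerivAt (fun s => y s + w s ^ 2 - s) ((-(pdX (HC3 a0 a1 a2 a3) t0 (x t0) (y t0) (z t0) (w t0)) + ((2:ℕ):ℂ) * w t0 ^ (2 - 1) * (-(pdZ (HC3 a0 a1 a2 a3) t0 (x t0) (y t0) (z t0) (w t0)))) - 1) t0 :=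
      (hy.add (hw.pow 2)).sub (hasDerivAt_id t0)
    refine ⟨?_, ?_, ?_, ?_⟩
    · have hXc : HasDerivAt (fun s => x s + a2 / (y s + w s ^ 2 - s)) (pdY (HC3 a0 a1 a2 a3) t0 (x t0) (y t0) (z t0) (w t0) + (0 * (y t0 + w t0 ^ 2 - t0) - a2 * ((-(pdX (HC3 a0 a1 a2 a3) t0 (x t0) (y t0) (z t0) (w t0)) + ((2:ℕ):ℂ) * w t0 ^ (2 - 1) * (-(pdZ (HC3 a0 a1 a2 a3) t0 (x t0) (y t0) (z t0) (w t0)))) - 1)) / (y t0 + w t0 ^ 2 - t0) ^ 2) t0 :=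
        hx.add ((hasDerivAt_const t0 a2).div hD hDn)
      show HasDerivAt (fun s => x s + a2 / (y s + w s ^ 2 - s)) (pdY (HC3 a0 (a1 + a2) (-a2) (a3 + 2 * a2)) t0 (x t0 + a2 / (y t0 + w t0 ^ 2 - t0)) (y t0) (z t0 + 2 * a2 * w t0 / (y t0 + w t0 ^ 2 - t0)) (w t0)) t0
      have e1 : pdY (HC3 a0 (a1 + a2) (-a2) (a3 + 2 * a2)) t0 (x t0 + a2 / (y t0 + w t0 ^ 2 - t0)) (y t0) (z t0 + 2 * a2 * w t0 / (y t0 + w t0 ^ 2 - t0)) (w t0) = pdY (HC3 a0 a1 a2 a3) t0 (x t0) (y t0) (z t0) (w t0) + (0 * (y t0 + w t0 ^ 2 - t0) - a2 * ((-(pdX (HC3 a0 a1 a2 a3) t0 (x t0) (y t0) (z t0) (w t0)) + ((2:ℕ):ℂ) * w t0 ^ (2 - 1) * (-(pdZ (HC3 a0 a1 a2 a3) t0 (x t0) (y t0) (z t0) (w t0)))) - 1)) / (y t0 + w t0 ^ 2 - t0) ^ 2 := by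
        simp only [pdX_HC3, pdY_HC3, pdZ_HC3, pdW_HC3, pow_two (y t0 + w t0 ^ 2 - t0), ← div_div]
        linear_combination ((1) * a2 * (w t0) ^ 2 * t0⁻¹ * (y t0 + w t0 ^ 2 - t0)⁻¹ ^ 2 + (2) * a2 * (z t0) * (w t0) * t0⁻¹ * (y t0 + w t0 ^ 2 - t0)⁻¹ + (-2) * a2 * (z t0) * (w t0) ^ 3 * t0⁻¹ * (y t0 + w t0 ^ 2 - t0)⁻¹ ^ 2 + (-2) * a2 * (y t0) * (z t0) * (w t0) * t0⁻¹ * (y t0 + w t0 ^ 2 - t0)⁻¹ ^ 2 + (2) * a2 * (x t0) * (y t0 + w t0 ^ 2 - t0)⁻¹ + (-4) * a2 * (x t0) * t0⁻¹ + (-2) * a2 * (x t0) * (w t0) ^ 2 * (y t0 + w t0 ^ 2 - t0)⁻¹ ^ 2 + (4) * a2 * (x t0) * (w t0) ^ 2 * t0⁻¹ * (y t0 + w t0 ^ 2 - t0)⁻¹ + (-2) * a2 * (x t0) * (y t0) * (y t0 + w t0 ^ 2 - t0)⁻¹ ^ 2 + (8) * a2 * (x t0) * (y t0) * t0⁻¹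 * (y t0 + w t0 ^ 2 - t0)⁻¹ + (-4) * a2 * (x t0) * (y t0) * (w t0) ^ 2 * t0⁻¹ * (y t0 + w t0 ^ 2 - t0)⁻¹ ^ 2 + (-4) * a2 * (x t0) * (y t0) ^ 2 * t0⁻¹ * (y t0 + w t0 ^ 2 - t0)⁻¹ ^ 2 + (2) * a2 * t0 * (z t0) * (w t0) * t0⁻¹ * (y t0 + w t0 ^ 2 - t0)⁻¹ ^ 2 + (2) * a2 * t0 * (x t0) * (y t0 + w t0 ^ 2 - t0)⁻¹ ^ 2 + (-6) * a2 * t0 * (x t0) * t0⁻¹ * (y t0 + w t0 ^ 2 - t0)⁻¹ + (2) * a2 * t0 * (x t0) * (w t0) ^ 2 * t0⁻¹ * (y t0 + w t0 ^ 2 - t0)⁻¹ ^ 2 + (6) * a2 * t0 * (x t0) * (y t0) * t0⁻¹ * (y t0 + w t0 ^ 2 - t0)⁻¹ ^ 2 + (-2) * a2 * t0 ^ 2 * (x t0) * t0⁻¹ * (y t0 + w t0 ^ 2 - t0)⁻¹ ^ 2 + (1) * a2 * a3 * (y t0 + w t0 ^ 2 - t0)⁻¹ ^ 2 + (-2) *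 a2 * a3 * t0⁻¹ * (y t0 + w t0 ^ 2 - t0)⁻¹ + (1) * a2 * a3 * (w t0) ^ 2 * t0⁻¹ * (y t0 + w t0 ^ 2 - t0)⁻¹ ^ 2 + (2) * a2 * a3 * (y t0) * t0⁻¹ * (y t0 + w t0 ^ 2 - t0)⁻¹ ^ 2 + (-1) * a2 * a3 * t0 * t0⁻¹ * (y t0 + w t0 ^ 2 - t0)⁻¹ ^ 2 + (2) * a2 ^ 2 * (y t0 + w t0 ^ 2 - t0)⁻¹ ^ 2 + (-6) * a2 ^ 2 * t0⁻¹ * (y t0 + w t0 ^ 2 - t0)⁻¹ + (4) * a2 ^ 2 * (w t0) ^ 2 * t0⁻¹ * (y t0 + w t0 ^ 2 - t0)⁻¹ ^ 2 + (6) * a2 ^ 2 * (y t0) * t0⁻¹ * (y t0 + w t0 ^ 2 - t0)⁻¹ ^ 2 + (-4) * a2 ^ 2 * t0 * t0⁻¹ * (y t0 + w t0 ^ 2 - t0)⁻¹ ^ 2 + (2) * a1 * a2 * (y t0 + w t0 ^ 2 - t0)⁻¹ ^ 2 + (-4) * a1 * a2 * t0⁻¹ * (y t0 + w t0 ^ 2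 - t0)⁻¹ + (2) * a1 * a2 * (w t0) ^ 2 * t0⁻¹ * (y t0 + w t0 ^ 2 - t0)⁻¹ ^ 2 + (4) * a1 * a2 * (y t0) * t0⁻¹ * (y t0 + w t0 ^ 2 - t0)⁻¹ ^ 2 + (-2) * a1 * a2 * t0 * t0⁻¹ * (y t0 + w t0 ^ 2 - t0)⁻¹ ^ 2 + (1) * a0 * a2 * (y t0 + w t0 ^ 2 - t0)⁻¹ ^ 2 + (-1) * a0 * a2 * t0⁻¹ * (y t0 + w t0 ^ 2 - t0)⁻¹ + (1) * a0 * a2 * (y t0) * t0⁻¹ * (y t0 + w t0 ^ 2 - t0)⁻¹ ^ 2) * hti + ((-1) * a2 * t0⁻¹ ^ 2 * (y t0 + w t0 ^ 2 - t0)⁻¹ + (-2) * a2 * (z t0) * (w t0) * t0⁻¹ * (y t0 + w t0 ^ 2 - t0)⁻¹ + (1) * a2 * (z t0) * (w t0) * t0⁻¹ ^ 2 + (1) * a2 * (z t0) * (w t0) ^ 3 * t0⁻¹ ^ 2 * (y t0 + w t0 ^ 2 - t0)⁻¹ + (-1) * a2 * (y t0) * (z t0) * (w t0) * t0⁻¹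 ^ 2 * (y t0 + w t0 ^ 2 - t0)⁻¹ + (-2) * a2 * (x t0) * (y t0 + w t0 ^ 2 - t0)⁻¹ + (4) * a2 * (x t0) * t0⁻¹ + (-4) * a2 * (x t0) * (y t0) * t0⁻¹ * (y t0 + w t0 ^ 2 - t0)⁻¹ + (4) * a2 * (x t0) * (y t0) * t0⁻¹ ^ 2 + (-2) * a2 * (x t0) * (y t0) ^ 2 * t0⁻¹ ^ 2 * (y t0 + w t0 ^ 2 - t0)⁻¹ + (1) * a2 * t0 * (z t0) * (w t0) * t0⁻¹ ^ 2 * (y t0 + w t0 ^ 2 - t0)⁻¹ + (4) * a2 * t0 * (x t0) * t0⁻¹ * (y t0 + w t0 ^ 2 - t0)⁻¹ + (-4) * a2 * t0 * (x t0) * t0⁻¹ ^ 2 + (4) * a2 * t0 * (x t0) * (y t0) * t0⁻¹ ^ 2 * (y t0 + w t0 ^ 2 - t0)⁻¹ + (-2) * a2 * t0 ^ 2 * (x t0) * t0⁻¹ ^ 2 * (y t0 + w t0 ^ 2 - t0)⁻¹ + (2) * a2 * a3 * t0⁻¹ * (y t0 + w t0 ^ 2 - t0)⁻¹ + (-1)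 * a2 * a3 * t0⁻¹ ^ 2 + (-1) * a2 * a3 * (w t0) ^ 2 * t0⁻¹ ^ 2 * (y t0 + w t0 ^ 2 - t0)⁻¹ + (1) * a2 * a3 * (y t0) * t0⁻¹ ^ 2 * (y t0 + w t0 ^ 2 - t0)⁻¹ + (-1) * a2 * a3 * t0 * t0⁻¹ ^ 2 * (y t0 + w t0 ^ 2 - t0)⁻¹ + (6) * a2 ^ 2 * t0⁻¹ * (y t0 + w t0 ^ 2 - t0)⁻¹ + (-2) * a2 ^ 2 * t0⁻¹ ^ 2 + (4) * a2 ^ 2 * (y t0) * t0⁻¹ ^ 2 * (y t0 + w t0 ^ 2 - t0)⁻¹ + (-4) * a2 ^ 2 * t0 * t0⁻¹ ^ 2 * (y t0 + w t0 ^ 2 - t0)⁻¹ + (4) * a1 * a2 * t0⁻¹ * (y t0 + w t0 ^ 2 - t0)⁻¹ + (-2) * a1 * a2 * t0⁻¹ ^ 2 + (2) * a1 * a2 * (y t0) * t0⁻¹ ^ 2 * (y t0 + w t0 ^ 2 - t0)⁻¹ + (-2) * a1 * a2 * t0 * t0⁻¹ ^ 2 * (y t0 + w t0 ^ 2 - t0)⁻¹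 + (1) * a0 * a2 * t0⁻¹ * (y t0 + w t0 ^ 2 - t0)⁻¹) * hDu + ((1) * a2 * (y t0 + w t0 ^ 2 - t0)⁻¹ ^ 2 + (-1) * a2 * (w t0) ^ 2 * t0⁻¹ * (y t0 + w t0 ^ 2 - t0)⁻¹ ^ 2) * hrel
      rw [e1]; exact hXc
    · show HasDerivAt y (-(pdX (HC3 a0 (a1 + a2) (-a2) (a3 + 2 * a2)) t0 (x t0 + a2 / (y t0 + w t0 ^ 2 - t0)) (y t0) (z t0 + 2 * a2 * w t0 / (y t0 + w t0 ^ 2 - t0)) (w t0))) t0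
      have e2 : pdX (HC3 a0 (a1 + a2) (-a2) (a3 + 2 * a2)) t0 (x t0 + a2 / (y t0 + w t0 ^ 2 - t0)) (y t0) (z t0 + 2 * a2 * w t0 / (y t0 + w t0 ^ 2 - t0)) (w t0) = pdX (HC3 a0 a1 a2 a3) t0 (x t0) (y t0) (z t0) (w t0) := by
        simp only [pdX_HC3, pdY_HC3, pdZ_HC3, pdW_HC3]
        linear_combination ((-2) * a2 + (2) * a2 * (w t0) ^ 2 * (y t0 + w t0 ^ 2 - t0)⁻¹ + (2) * a2 * (y t0) * (y t0 + w t0 ^ 2 - t0)⁻¹ + (-4) * a2 * (y t0) * t0⁻¹ + (4) * a2 * (y t0) * (w t0) ^ 2 * t0⁻¹ * (y t0 + w t0 ^ 2 - t0)⁻¹ + (4) * a2 * (y t0) ^ 2 * t0⁻¹ * (y t0 + w t0 ^ 2 - t0)⁻¹ + (-2) * a2 * t0 * (y t0 + w t0 ^ 2 - t0)⁻¹ + (2) * a2 * t0 * t0⁻¹ + (-2) * a2 * t0 * (w t0) ^ 2 * t0⁻¹ * (y t0 + w t0 ^ 2 - t0)⁻¹ + (-6) * a2 * t0 * (y t0)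 * t0⁻¹ * (y t0 + w t0 ^ 2 - t0)⁻¹ + (2) * a2 * t0 ^ 2 * t0⁻¹ * (y t0 + w t0 ^ 2 - t0)⁻¹) * hti + ((2) * a2 + (4) * a2 * (y t0) * t0⁻¹ + (2) * a2 * (y t0) ^ 2 * t0⁻¹ ^ 2 + (-4) * a2 * t0 * t0⁻¹ + (-4) * a2 * t0 * (y t0) * t0⁻¹ ^ 2 + (2) * a2 * t0 ^ 2 * t0⁻¹ ^ 2) * hDu
      rw [e2]; exact hy
    · have hZc : HasDerivAt (fun s => z s + 2 * a2 * w s / (y s + w s ^ 2 - s)) (pdW (HC3 a0 a1 a2 a3) t0 (x t0) (y t0) (z t0) (w t0) + ((0 * w t0 + 2 * a2 * (-(pdZ (HC3 a0 a1 a2 a3) t0 (x t0) (y t0) (z t0) (w t0)))) * (y t0 + w t0 ^ 2 - t0) - 2 * a2 * w t0 * ((-(pdX (HC3 a0 a1 a2 a3) t0 (x t0) (y t0) (z t0) (w t0)) + ((2:ℕ):ℂ) * w t0 ^ (2 - 1) * (-(pdZ (HC3 a0 a1 a2 a3) t0 (x t0) (y t0) (z t0) (w t0)))) - 1)) / (y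 t0 + w t0 ^ 2 - t0) ^ 2) t0 :=
        hz.add (((hasDerivAt_const t0 (2 * a2)).mul hw).div hD hDn)
      show HasDerivAt (fun s => z s + 2 * a2 * w s / (y s + w s ^ 2 - s)) (pdW (HC3 a0 (a1 + a2) (-a2) (a3 + 2 * a2)) t0 (x t0 + a2 / (y t0 + w t0 ^ 2 - t0)) (y t0) (z t0 + 2 * a2 * w t0 / (y t0 + w t0 ^ 2 - t0)) (w t0)) t0
      have e3 : pdW (HC3 a0 (a1 + a2) (-a2) (a3 + 2 * a2)) t0 (x t0 + a2 / (y t0 + w t0 ^ 2 - t0)) (y t0) (z t0 + 2 * a2 * w t0 / (y t0 + w t0 ^ 2 - t0)) (w t0) = pdW (HC3 a0 a1 a2 a3) t0 (x t0) (y t0) (z t0) (w t0) + ((0 * w t0 + 2 * a2 * (-(pdZ (HC3 a0 a1 a2 a3) t0 (x t0) (y t0) (z t0) (w t0)))) * (y t0 + w t0 ^ 2 - t0) - 2 * a2 * w t0 * ((-(pdX (HC3 a0 a1 a2 a3) t0 (x t0) (y t0) (z t0) (w t0)) + ((2:ℕ):ℂ) * w t0 ^ (2 - 1) * (-(pdZ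 (HC3 a0 a1 a2 a3) t0 (x t0) (y t0) (z t0) (w t0)))) - 1)) / (y t0 + w t0 ^ 2 - t0) ^ 2 := by
        simp only [pdX_HC3, pdY_HC3, pdZ_HC3, pdW_HC3, pow_two (y t0 + w t0 ^ 2 - t0), ← div_div]
        linear_combination ((-1) * a2 * (w t0) * t0⁻¹ * (y t0 + w t0 ^ 2 - t0)⁻¹ + (1) * a2 * (w t0) ^ 3 * t0⁻¹ * (y t0 + w t0 ^ 2 - t0)⁻¹ ^ 2 + (1) * a2 * (z t0) * (y t0 + w t0 ^ 2 - t0)⁻¹ + (-2) * a2 * (z t0) * t0⁻¹ + (-1) * a2 * (z t0) * (w t0) ^ 2 * (y t0 + w t0 ^ 2 - t0)⁻¹ ^ 2 + (4) * a2 * (z t0) * (w t0) ^ 2 * t0⁻¹ * (y t0 + w t0 ^ 2 - t0)⁻¹ + (-2) * a2 * (z t0) * (w t0) ^ 4 * t0⁻¹ * (y t0 + w t0 ^ 2 - t0)⁻¹ ^ 2 + (-1) * a2 * (y t0) * (w t0) * t0⁻¹ * (y t0 + w t0 ^ 2 - t0)⁻¹ ^ 2 + (-1) * a2 * (y t0)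 * (z t0) * (y t0 + w t0 ^ 2 - t0)⁻¹ ^ 2 + (2) * a2 * (y t0) * (z t0) * t0⁻¹ * (y t0 + w t0 ^ 2 - t0)⁻¹ + (-2) * a2 * (y t0) * (z t0) * (w t0) ^ 2 * t0⁻¹ * (y t0 + w t0 ^ 2 - t0)⁻¹ ^ 2 + (2) * a2 * (x t0) * (w t0) * (y t0 + w t0 ^ 2 - t0)⁻¹ + (-2) * a2 * (x t0) * (w t0) ^ 3 * (y t0 + w t0 ^ 2 - t0)⁻¹ ^ 2 + (-2) * a2 * (x t0) * (y t0) * (w t0) * (y t0 + w t0 ^ 2 - t0)⁻¹ ^ 2 + (4) * a2 * (x t0) * (y t0) * (w t0) * t0⁻¹ * (y t0 + w t0 ^ 2 - t0)⁻¹ + (-4) * a2 * (x t0) * (y t0) * (w t0) ^ 3 * t0⁻¹ * (y t0 + w t0 ^ 2 - t0)⁻¹ ^ 2 + (-4) * a2 * (x t0) * (y t0) ^ 2 * (w t0) * t0⁻¹ * (y t0 + w t0 ^ 2 - t0)⁻¹ ^ 2 + (1) * a2 * t0 * (w t0) * t0⁻¹ * (y t0 + w t0 ^ 2 - t0)⁻¹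 ^ 2 + (1) * a2 * t0 * (z t0) * (y t0 + w t0 ^ 2 - t0)⁻¹ ^ 2 + (-1) * a2 * t0 * (z t0) * t0⁻¹ * (y t0 + w t0 ^ 2 - t0)⁻¹ + (1) * a2 * t0 * (z t0) * (w t0) ^ 2 * t0⁻¹ * (y t0 + w t0 ^ 2 - t0)⁻¹ ^ 2 + (-1) * a2 * t0 * (y t0) * (z t0) * t0⁻¹ * (y t0 + w t0 ^ 2 - t0)⁻¹ ^ 2 + (2) * a2 * t0 * (x t0) * (w t0) * (y t0 + w t0 ^ 2 - t0)⁻¹ ^ 2 + (-2) * a2 * t0 * (x t0) * (w t0) * t0⁻¹ * (y t0 + w t0 ^ 2 - t0)⁻¹ + (2) * a2 * t0 * (x t0) * (w t0) ^ 3 * t0⁻¹ * (y t0 + w t0 ^ 2 - t0)⁻¹ ^ 2 + (6) * a2 * t0 * (x t0) * (y t0) * (w t0) * t0⁻¹ * (y t0 + w t0 ^ 2 - t0)⁻¹ ^ 2 + (1) * a2 * t0 ^ 2 * (z t0) * t0⁻¹ * (y t0 + w t0 ^ 2 - t0)⁻¹ ^ 2 + (-2) * a2 * t0 ^ 2 *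 (x t0) * (w t0) * t0⁻¹ * (y t0 + w t0 ^ 2 - t0)⁻¹ ^ 2 + (2) * a2 * a3 * (w t0) * (y t0 + w t0 ^ 2 - t0)⁻¹ ^ 2 + (-1) * a2 * a3 * (w t0) * t0⁻¹ * (y t0 + w t0 ^ 2 - t0)⁻¹ + (1) * a2 * a3 * (w t0) ^ 3 * t0⁻¹ * (y t0 + w t0 ^ 2 - t0)⁻¹ ^ 2 + (3) * a2 * a3 * (y t0) * (w t0) * t0⁻¹ * (y t0 + w t0 ^ 2 - t0)⁻¹ ^ 2 + (-1) * a2 * a3 * t0 * (w t0) * t0⁻¹ * (y t0 + w t0 ^ 2 - t0)⁻¹ ^ 2 + (4) * a2 ^ 2 * (w t0) * (y t0 + w t0 ^ 2 - t0)⁻¹ ^ 2 + (-4) * a2 ^ 2 * (w t0) * t0⁻¹ * (y t0 + w t0 ^ 2 - t0)⁻¹ + (4) * a2 ^ 2 * (w t0) ^ 3 * t0⁻¹ * (y t0 + w t0 ^ 2 - t0)⁻¹ ^ 2 + (8) * a2 ^ 2 * (y t0) * (w t0) * t0⁻¹ * (y t0 + w t0 ^ 2 - t0)⁻¹ ^ 2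 + (-4) * a2 ^ 2 * t0 * (w t0) * t0⁻¹ * (y t0 + w t0 ^ 2 - t0)⁻¹ ^ 2 + (4) * a1 * a2 * (w t0) * (y t0 + w t0 ^ 2 - t0)⁻¹ ^ 2 + (-2) * a1 * a2 * (w t0) * t0⁻¹ * (y t0 + w t0 ^ 2 - t0)⁻¹ + (2) * a1 * a2 * (w t0) ^ 3 * t0⁻¹ * (y t0 + w t0 ^ 2 - t0)⁻¹ ^ 2 + (6) * a1 * a2 * (y t0) * (w t0) * t0⁻¹ * (y t0 + w t0 ^ 2 - t0)⁻¹ ^ 2 + (-2) * a1 * a2 * t0 * (w t0) * t0⁻¹ * (y t0 + w t0 ^ 2 - t0)⁻¹ ^ 2 + (2) * a0 * a2 * (w t0) * (y t0 + w t0 ^ 2 - t0)⁻¹ ^ 2 + (2) * a0 * a2 * (y t0) * (w t0) * t0⁻¹ * (y t0 + w t0 ^ 2 - t0)⁻¹ ^ 2) * hti + ((-1) * a2 * (w t0) * t0⁻¹ * (y t0 + w t0 ^ 2 - t0)⁻¹ + (-1) * a2 * (w t0) * t0⁻¹ ^ 2 * (y t0 + w t0 ^ 2 - t0)⁻¹ +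 (-1) * a2 * (z t0) * (y t0 + w t0 ^ 2 - t0)⁻¹ + (2) * a2 * (z t0) * t0⁻¹ + (-2) * a2 * (z t0) * (w t0) ^ 2 * t0⁻¹ * (y t0 + w t0 ^ 2 - t0)⁻¹ + (-3) * a2 * (z t0) * (w t0) ^ 2 * t0⁻¹ ^ 2 + (1) * a2 * (z t0) * (w t0) ^ 4 * t0⁻¹ ^ 2 * (y t0 + w t0 ^ 2 - t0)⁻¹ + (1) * a2 * (y t0) * (z t0) * t0⁻¹ ^ 2 + (-2) * a2 * (y t0) * (z t0) * (w t0) ^ 2 * t0⁻¹ ^ 2 * (y t0 + w t0 ^ 2 - t0)⁻¹ + (-2) * a2 * (x t0) * (w t0) * (y t0 + w t0 ^ 2 - t0)⁻¹ + (-4) * a2 * (x t0) * (y t0) * (w t0) * t0⁻¹ * (y t0 + w t0 ^ 2 - t0)⁻¹ + (-2) * a2 * (x t0) * (y t0) ^ 2 * (w t0) * t0⁻¹ ^ 2 * (y t0 + w t0 ^ 2 - t0)⁻¹ + (-1) * a2 * t0 * (z t0) * t0⁻¹ ^ 2 + (2) * a2 * t0 * (z t0) * (w t0) ^ 2 * t0⁻¹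 ^ 2 * (y t0 + w t0 ^ 2 - t0)⁻¹ + (4) * a2 * t0 * (x t0) * (w t0) * t0⁻¹ * (y t0 + w t0 ^ 2 - t0)⁻¹ + (4) * a2 * t0 * (x t0) * (y t0) * (w t0) * t0⁻¹ ^ 2 * (y t0 + w t0 ^ 2 - t0)⁻¹ + (-2) * a2 * t0 ^ 2 * (x t0) * (w t0) * t0⁻¹ ^ 2 * (y t0 + w t0 ^ 2 - t0)⁻¹ + (3) * a2 * a3 * (w t0) * t0⁻¹ * (y t0 + w t0 ^ 2 - t0)⁻¹ + (2) * a2 * a3 * (w t0) * t0⁻¹ ^ 2 + (-1) * a2 * a3 * (w t0) ^ 3 * t0⁻¹ ^ 2 * (y t0 + w t0 ^ 2 - t0)⁻¹ + (2) * a2 * a3 * (y t0) * (w t0) * t0⁻¹ ^ 2 * (y t0 + w t0 ^ 2 - t0)⁻¹ + (-2) * a2 * a3 * t0 * (w t0) * t0⁻¹ ^ 2 * (y t0 + w t0 ^ 2 - t0)⁻¹ + (8) * a2 ^ 2 * (w t0) * t0⁻¹ * (y t0 + w t0 ^ 2 - t0)⁻¹ + (2) * a2 ^ 2 * (w t0)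 * t0⁻¹ ^ 2 + (-4) * a2 ^ 2 * (w t0) ^ 3 * t0⁻¹ ^ 2 * (y t0 + w t0 ^ 2 - t0)⁻¹ + (4) * a2 ^ 2 * (y t0) * (w t0) * t0⁻¹ ^ 2 * (y t0 + w t0 ^ 2 - t0)⁻¹ + (-4) * a2 ^ 2 * t0 * (w t0) * t0⁻¹ ^ 2 * (y t0 + w t0 ^ 2 - t0)⁻¹ + (6) * a1 * a2 * (w t0) * t0⁻¹ * (y t0 + w t0 ^ 2 - t0)⁻¹ + (2) * a1 * a2 * (y t0) * (w t0) * t0⁻¹ ^ 2 * (y t0 + w t0 ^ 2 - t0)⁻¹ + (-2) * a1 * a2 * t0 * (w t0) * t0⁻¹ ^ 2 * (y t0 + w t0 ^ 2 - t0)⁻¹ + (2) * a0 * a2 * (w t0) * t0⁻¹ * (y t0 + w t0 ^ 2 - t0)⁻¹) * hDu + ((2) * a2 * (w t0) * (y t0 + w t0 ^ 2 - t0)⁻¹ ^ 2 + (2) * a2 * (w t0) * t0⁻¹ * (y t0 + w t0 ^ 2 - t0)⁻¹ + (-2) * a2 * (w t0) ^ 3 * t0⁻¹ * (y t0 + w t0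 ^ 2 - t0)⁻¹ ^ 2) * hrel
      rw [e3]; exact hZc
    · show HasDerivAt w (-(pdZ (HC3 a0 (a1 + a2) (-a2) (a3 + 2 * a2)) t0 (x t0 + a2 / (y t0 + w t0 ^ 2 - t0)) (y t0) (z t0 + 2 * a2 * w t0 / (y t0 + w t0 ^ 2 - t0)) (w t0))) t0
      have e4 : pdZ (HC3 a0 (a1 + a2) (-a2) (a3 + 2 * a2)) t0 (x t0 + a2 / (y t0 + w t0 ^ 2 - t0)) (y t0) (z t0 + 2 * a2 * w t0 / (y t0 + w t0 ^ 2 - t0)) (w t0) = pdZ (HC3 a0 a1 a2 a3) t0 (x t0) (y t0) (z t0) (w t0) := by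
        simp only [pdX_HC3, pdY_HC3, pdZ_HC3, pdW_HC3]
        linear_combination ((-2) * a2 * (w t0) * t0⁻¹ + (2) * a2 * (w t0) ^ 3 * t0⁻¹ * (y t0 + w t0 ^ 2 - t0)⁻¹ + (2) * a2 * (y t0) * (w t0) * t0⁻¹ * (y t0 + w t0 ^ 2 - t0)⁻¹ + (-2) * a2 * t0 * (w t0) * t0⁻¹ * (y t0 + w t0 ^ 2 - t0)⁻¹) * hti + ((2) * a2 * (w t0) * t0⁻¹ + (-1) * a2 * (w t0) ^ 3 * t0⁻¹ ^ 2 + (1) * a2 * (y t0) * (w t0) * t0⁻¹ ^ 2 + (-1) * a2 * t0 * (w t0) * t0⁻¹ ^ 2) * hDu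
      rw [e4]; exact hw
  · -- S3
    intro hden t0 ht0
    obtain ⟨hx, hy, hz, hw⟩ := hsol t0 ht0
    have ht : t0 ≠ 0 := hU0 t0 ht0
    have hzn : z t0 ≠ 0 := hden t0 ht0
    have hti : t0 * t0⁻¹ = 1 := mul_inv_cancel₀ ht
    have hzi : z t0 * (z t0)⁻¹ = 1 := mul_inv_cancel₀ hzn
    refine ⟨?_, ?_, ?_, ?_⟩
    · show HasDerivAt x (pdY (HC3 a0 a1 (a2 + a3) (-a3)) t0 (x t0) (y t0) (z t0) (w t0 - a3 / z t0)) t0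
      have e1 : pdY (HC3 a0 a1 (a2 + a3) (-a3)) t0 (x t0) (y t0) (z t0) (w t0 - a3 / z t0) = pdY (HC3 a0 a1 a2 a3) t0 (x t0) (y t0) (z t0) (w t0) := by
        simp only [pdX_HC3, pdY_HC3, pdZ_HC3, pdW_HC3]
        linear_combination ((-2) * a3 * (x t0) * (y t0) * t0⁻¹ ^ 2 + (1) * a1 * a3 * t0⁻¹ ^ 2) * hzi
      rw [e1]; exact hx
    · show HasDerivAt y (-(pdX (HC3 a0 a1 (a2 + a3) (-a3)) t0 (x t0) (y t0) (z t0) (w t0 - a3 / z t0))) t0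
      have e2 : pdX (HC3 a0 a1 (a2 + a3) (-a3)) t0 (x t0) (y t0) (z t0) (w t0 - a3 / z t0) = pdX (HC3 a0 a1 a2 a3) t0 (x t0) (y t0) (z t0) (w t0) := by
        simp only [pdX_HC3, pdY_HC3, pdZ_HC3, pdW_HC3]
        linear_combination ((-1) * a3 * (y t0) ^ 2 * t0⁻¹ ^ 2) * hzi
      rw [e2]; exact hy
    · show HasDerivAt z (pdW (HC3 a0 a1 (a2 + a3) (-a3)) t0 (x t0) (y t0) (z t0) (w t0 - a3 / z t0)) t0
      have e3 : pdW (HC3 a0 a1 (a2 + a3) (-a3)) t0 (x t0) (y t0) (z t0) (w t0 - a3 / z t0) = pdW (HC3 a0 a1 a2 a3) t0 (x t0) (y t0) (z t0) (w t0) := by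
        simp only [pdX_HC3, pdY_HC3, pdZ_HC3, pdW_HC3]
        linear_combination ((1) * a3 * (z t0) * t0⁻¹ + (-1) * a3 * (z t0) ^ 2 * t0⁻¹ * (z t0)⁻¹) * hti + ((-1) * a3 * (z t0) * t0⁻¹ + (3) * a3 * (z t0) * (w t0) ^ 2 * t0⁻¹ ^ 2 + (-3) * a3 ^ 2 * (z t0) * (w t0) * t0⁻¹ ^ 2 * (z t0)⁻¹ + (-1/2) * a3 ^ 3 * t0⁻¹ ^ 2 * (z t0)⁻¹ + (1) * a3 ^ 3 * (z t0) * t0⁻¹ ^ 2 * (z t0)⁻¹ ^ 2) * hzi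
      rw [e3]; exact hz
    · have hD : HasDerivAt (fun s => w s - a3 / z s)
          (-(pdZ (HC3 a0 a1 a2 a3) t0 (x t0) (y t0) (z t0) (w t0)) - (0 * z t0 - a3 * (pdW (HC3 a0 a1 a2 a3) t0 (x t0) (y t0) (z t0) (w t0))) / z t0 ^ 2) t0 :=
        hw.sub ((hasDerivAt_const t0 a3).div hz hzn)
      show HasDerivAt (fun s => w s - a3 / z s) (-(pdZ (HC3 a0 a1 (a2 + a3) (-a3)) t0 (x t0) (y t0) (z t0) (w t0 - a3 / z t0))) t0
      have e4 : -(pdZ (HC3 a0 a1 (a2 + a3) (-a3)) t0 (x t0) (y t0) (z t0) (w t0 - a3 / z t0)) = -(pdZ (HC3 a0 a1 a2 a3) t0 (x t0) (y t0) (z t0) (w t0)) - (0 * z t0 - a3 * (pdW (HC3 a0 a1 a2 a3) t0 (x t0) (y t0) (z t0) (w t0))) / z t0 ^ 2 := by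
        simp only [pdX_HC3, pdY_HC3, pdZ_HC3, pdW_HC3]
        linear_combination ((-1/2) * a3 * t0⁻¹ * (z t0)⁻¹ + (-1) * a3 * (w t0) * t0⁻¹ + (1/2) * a3 * (z t0) * t0⁻¹ * (z t0)⁻¹ ^ 2 + (2) * a3 * (z t0) * (w t0) * t0⁻¹ * (z t0)⁻¹ + (-1) * a3 * (z t0) ^ 2 * (w t0) * t0⁻¹ * (z t0)⁻¹ ^ 2 + (1/2) * a3 ^ 2 * t0⁻¹ * (z t0)⁻¹ + (-1/2) * a3 ^ 2 * (z t0) * t0⁻¹ * (z t0)⁻¹ ^ 2) * hti + ((1/2) * a3 * t0⁻¹ * (z t0)⁻¹ + (-1/2) * a3 * t0⁻¹ ^ 2 * (z t0)⁻¹ + (1) * a3 * (w t0) * t0⁻¹ + (-1) * a3 * (w t0) ^ 3 * t0⁻¹ ^ 2 + (-1) * a3 * (z t0) * (w t0) * t0⁻¹ * (z t0)⁻¹ + (1) * a3 * (z t0) * (w t0) ^ 3 * t0⁻¹ ^ 2 * (z t0)⁻¹ + (-1) * a3 * (x t0) * (y t0) ^ 2 * t0⁻¹ ^ 2 * (z t0)⁻¹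 + (-1/2) * a3 ^ 2 * t0⁻¹ * (z t0)⁻¹ + (3/2) * a3 ^ 2 * (w t0) ^ 2 * t0⁻¹ ^ 2 * (z t0)⁻¹ + (-2) * a3 ^ 3 * (w t0) * t0⁻¹ ^ 2 * (z t0)⁻¹ ^ 2 + (1/2) * a3 ^ 4 * t0⁻¹ ^ 2 * (z t0)⁻¹ ^ 3 + (1) * a1 * a3 * (y t0) * t0⁻¹ ^ 2 * (z t0)⁻¹) * hzi
      rw [e4]; exact hD
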